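/- Define U₅=(A₅,F₅) with A₅=⋃_{i∈ℕ}{(i,1),…,(i,i)} and F₅=⋃_{i∈ℕ}{fᵢ, f_{i,1},…,f_{i,i}}, where fᵢ(a)=1 iff a∈{(i,1),…,(i,i)} and f_{i,j}(a)=1 iff a=(i,j). Then for every i∈ℕ, the system Sᵢ={fᵢ(x)=1, f_{i,1}(x)=0,…,f_{i,i}(x)=0} is inconsistent on A₅ but every proper subsystem of Sᵢ is consistent. Hence U₅ is not r-i-reduced for any r. -/
import Mathlib


/-- An equation system over a binary information system with element set `A`
is a set of pairs `(g, δ)` encoding equations `g(x) = δ`. It is consistent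
if it has a solution in `A`. -/
def Consistent {A : Type} (S : Set ((A → Bool) × Bool)) : Prop :=
  ∃ a : A, ∀ e ∈ S, e.1 a = e.2

/-- The system `S` uses only attributes from `F`. -/
def OverF {A : Type} (F : Set (A → Bool)) (S : Set ((A → Bool) × Bool)) : Prop :=
  ∀ e ∈ S, e.1 ∈ F

/-- Solution set of an equation system. -/
def Sol {A : Type} (S : Set ((A → Bool) × Bool)) : Set A :=
  {a | ∀ e ∈ S, e.1 a = e.2}

/-- `U = (A, F)` is `r`-i-reduced: every inconsistent (finite) equation system over `U`
has an inconsistent subsystem with at most `r` equations. -/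
def IReduced {A : Type} (F : Set (A → Bool)) (r : ℕ) : Prop :=
  ∀ S : Set ((A → Bool) × Bool), OverF F S → S.Finite → ¬ Consistent S →
    ∃ T ⊆ S, ¬ Consistent T ∧ T.ncard ≤ r

/-- `U = (A, F)` is `r`-reduced: every consistent (finite) equation system over `U`
has a subsystem with the same solution set and at most `r` equations. -/
def RReduced {A : Type} (F : Set (A → Bool)) (r : ℕ) : Prop :=
  ∀ S : Set ((A → Bool) × Bool), OverF F S → S.Finite → Consistent S →
    ∃ T ⊆ S, Sol T = Sol S ∧ T.ncard ≤ r

/-- The element set `A₅ = ⋃ᵢ {(i,1), …, (i,i)}`. -/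
def A5 : Type := {p : ℕ+ × ℕ+ // p.2 ≤ p.1}

/-- `fᵢ(a) = 1` iff `a ∈ {(i,1), …, (i,i)}`. -/
def fAttr (i : ℕ+) : A5 → Bool := fun a => decide (a.val.1 = i)

/-- `f_{i,j}(a) = 1` iff `a = (i,j)`. -/
def gAttr (i j : ℕ+) : A5 → Bool := fun a => decide (a.val = (i, j))

/-- The attribute set of `U₅`. -/
def F5 : Set (A5 → Bool) := Set.range fAttr ∪ {g | ∃ i j : ℕ+, j ≤ i ∧ g = gAttr i j}

/-- for every `i` the system
`Sᵢ = {fᵢ(x)=1, f_{i,1}(x)=0, …, f_{i,i}(x)=0}` is inconsistent on `A₅` while every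
proper subsystem of it is consistent; hence `U₅` is not `r`-i-reduced for any `r`. -/
lemma hmain : ∀ i : ℕ+, ∀ S : Set ((A5 → Bool) × Bool),
      S = insert (fAttr i, true) {e | ∃ j : ℕ+, j ≤ i ∧ e = (gAttr i j, false)} →
      ¬ Consistent S ∧ ∀ T, T ⊂ S → Consistent T := by
  intro i S hS
  subst hS
  constructor
  · rintro ⟨a, ha⟩
    have h1 := ha (fAttr i, true) (Set.mem_insert _ _)
    have hfi : a.val.1 = i := by simpa [fAttr] using h1
    have hj : a.val.2 ≤ i := hfi ▸ a.property
    have h2 := ha (gAttr i a.val.2, false)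
      (Set.mem_insert_of_mem _ ⟨a.val.2, hj, rfl⟩)
    simp [gAttr, Prod.ext_iff, hfi] at h2
  · intro T hT
    obtain ⟨hsub, hne⟩ := hT
    obtain ⟨e, heS, heT⟩ := Set.not_subset.mp hne
    rcases heS with rfl | ⟨j0, hj0, rfl⟩
    · refine ⟨⟨(i + 1, 1), (i + 1).one_le⟩, ?_⟩
      intro e' he'
      rcases hsub he' with rfl | ⟨j, hj, rfl⟩
      · exact absurd he' heT
      · have hne1 : i + 1 ≠ i := (PNat.lt_add_right i 1).ne'
        simp only [gAttr, Prod.ext_iff, decide_eq_false_iff_not, not_and]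
        exact fun h => absurd h hne1
    · refine ⟨⟨(i, j0), hj0⟩, ?_⟩
      intro e' he'
      rcases hsub he' with rfl | ⟨j, hj, rfl⟩
      · simp [fAttr]
      · have hne1 : j ≠ j0 := by rintro rfl; exact heT he'
        simp only [gAttr, Prod.ext_iff, decide_eq_false_iff_not, not_and]
        exact fun _ h => hne1 h.symm

lemma part2 : ∀ r : ℕ, ¬ IReduced F5 r := by
  intro r hred
  set i : ℕ+ := ⟨r + 1, Nat.succ_pos r⟩ with hi
  set S : Set ((A5 → Bool) × Bool) :=
    insert (fAttr i, true) {e | ∃ j : ℕ+, j ≤ i ∧ e = (gAttr i j, false)} with hSdef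
  have hover : OverF F5 S := by
    rintro e (rfl | ⟨j, hj, rfl⟩)
    · exact Or.inl ⟨i, rfl⟩
    · exact Or.inr ⟨i, j, hj, rfl⟩
  have hfin : S.Finite := by
    apply Set.Finite.insert
    have h : {e | ∃ j : ℕ+, j ≤ i ∧ e = (gAttr i j, false)}
        = (fun j => (gAttr i j, false)) '' (Set.Iic i) := by
      ext e; simp [Set.mem_image, eq_comm]
    rw [h]
    exact (Set.finite_Iic i).image _
  obtain ⟨T, hTS, hTinc, hTcard⟩ := hred S hover hfin (hmain i S rfl).1
  -- a family of r+1 distinct elements of S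
  have hφle : ∀ k : Fin (r + 1), (⟨k.1 + 1, k.1.succ_pos⟩ : ℕ+) ≤ i := by
    intro k
    have : k.1 + 1 ≤ r + 1 := Nat.succ_le_succ (Nat.lt_succ_iff.mp k.2)
    exact this
  set φ : Fin (r + 1) → (A5 → Bool) × Bool :=
    fun k => (gAttr i ⟨k.1 + 1, k.1.succ_pos⟩, false) with hφ
  have hφinj : Function.Injective φ := by
    intro k k' h
    have h2 := congrFun (congrArg Prod.fst h) ⟨(i, ⟨k.1 + 1, k.1.succ_pos⟩), hφle k⟩
    simp only [hφ, gAttr, decide_eq_decide] at h2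
    have h3 := h2.mp trivial
    have h4 := congrArg (fun p : ℕ+ × ℕ+ => p.2.val) h3
    exact Fin.ext (by simpa using h4)
  have hsubS : Set.range φ ⊆ S := by
    rintro e ⟨k, rfl⟩
    exact Set.mem_insert_of_mem _ ⟨_, hφle k, rfl⟩
  have hcard : r + 1 ≤ S.ncard := by
    have h1 : (Set.range φ).ncard = r + 1 := by
      rw [← Set.image_univ, Set.ncard_image_of_injective _ hφinj, Set.ncard_univ,
        Nat.card_eq_fintype_card, Fintype.card_fin]
    rw [← h1]
    exact Set.ncard_le_ncard hsubS hfin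
  have hTne : T ≠ S := by
    rintro rfl; omega
  exact hTinc ((hmain i S rfl).2 T (hTS.ssubset_of_ne hTne))


theorem stmt18 :
    (∀ i : ℕ+, ∀ S : Set ((A5 → Bool) × Bool),
      S = insert (fAttr i, true) {e | ∃ j : ℕ+, j ≤ i ∧ e = (gAttr i j, false)} →
      ¬ Consistent S ∧ ∀ T, T ⊂ S → Consistent T) ∧
    ∀ r : ℕ, ¬ IReduced F5 r := ⟨hmain, part2⟩
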